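/- arXiv:2406.16509 — 5 statements merged into one kernel-verified Lean document; each statement's English description precedes it below -/
import Mathlib

section
/- Embedding with asymptotically sharp constant: Let Ω have finite Lebesgue measure, φ ∈ Φ_w(Ω), c, L ≥ 1, p ≥ 1. Assume 1/c ≤ φ(x,1) ≤ c for a.e. x ∈ Ω and φ satisfies (aInc)_p with constant L. Then for every measurable f, ‖f‖_{L^p(Ω)} ≤ (2L(|Ω|+c))^{1/p} ‖f‖_φ; in particular L^φ(Ω) embeds continuously into L^p(Ω). -/
open MeasureTheory Set Filter Topology ENNReal

/-- The modular `ρ_φ(f) = ∫_Ω φ(x,|f(x)|) dx` of a generalized Orlicz space. -/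
noncomputable def gModular {N : ℕ} (Ω : Set (Fin N → ℝ))
    (φ : (Fin N → ℝ) → ℝ → ℝ≥0∞) (f : (Fin N → ℝ) → ℝ) : ℝ≥0∞ :=
  ∫⁻ x in Ω, φ x |f x|

/-- The Luxemburg quasinorm `‖f‖_φ = inf{λ > 0 : ρ_φ(f/λ) ≤ 1}` (with value `∞` if no
such `λ` exists). -/
noncomputable def luxNorm {N : ℕ} (Ω : Set (Fin N → ℝ))
    (φ : (Fin N → ℝ) → ℝ → ℝ≥0∞) (f : (Fin N → ℝ) → ℝ) : ℝ≥0∞ :=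
  sInf (ENNReal.ofReal '' {l : ℝ | 0 < l ∧ gModular Ω φ (fun x => f x / l) ≤ 1})

/-- `φ` is a generalized weak Φ-function on `Ω`: measurability of `x ↦ φ(x,|f(x)|)`,
`φ(x,0) = 0`, `lim_{t→0⁺} φ(x,t) = 0`, `lim_{t→∞} φ(x,t) = ∞`, `t ↦ φ(x,t)` increasing,
and `(aInc)₁` with some constant `L ≥ 1`. -/
def IsWeakPhi {N : ℕ} (Ω : Set (Fin N → ℝ)) (φ : (Fin N → ℝ) → ℝ → ℝ≥0∞) : Prop :=
  (∀ f : (Fin N → ℝ) → ℝ, Measurable f → Measurable fun x => φ x |f x|) ∧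
  (∀ᵐ x ∂(volume.restrict Ω),
      φ x 0 = 0 ∧ Tendsto (φ x) (nhdsWithin 0 (Ioi 0)) (nhds 0) ∧
      Tendsto (φ x) atTop (nhds ⊤) ∧ MonotoneOn (φ x) (Ici 0)) ∧
  (∃ L : ℝ, 1 ≤ L ∧ ∀ᵐ x ∂(volume.restrict Ω), ∀ t, 0 ≤ t → ∀ l, 0 ≤ l → l ≤ 1 →
      φ x (l * t) ≤ ENNReal.ofReal (L * l) * φ x t)

/-- **Embedding with asymptotically sharp constant.** If `|Ω| < ∞`,
`φ ∈ Φ_w(Ω)`, `1/c ≤ φ(x,1) ≤ c` a.e., and `φ` satisfies `(aInc)_p` with constant `L`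
(`c, L ≥ 1`, `p ≥ 1`), then `‖f‖_{L^p(Ω)} ≤ (2L(|Ω|+c))^{1/p} ‖f‖_φ` for every
measurable `f`; in particular `L^φ(Ω) ↪ L^p(Ω)`. -/
theorem orlicz_embedding_Lp {N : ℕ} (Ω : Set (Fin N → ℝ)) (hΩ : volume Ω < ⊤)
    (φ : (Fin N → ℝ) → ℝ → ℝ≥0∞) (hφ : IsWeakPhi Ω φ) (c L p : ℝ)
    (hc : 1 ≤ c) (hL : 1 ≤ L) (hp : 1 ≤ p)
    (hanch : ∀ᵐ x ∂(volume.restrict Ω),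
      ENNReal.ofReal (1 / c) ≤ φ x 1 ∧ φ x 1 ≤ ENNReal.ofReal c)
    (haInc : ∀ᵐ x ∂(volume.restrict Ω), ∀ t, 0 ≤ t → ∀ l, 0 ≤ l → l ≤ 1 →
      φ x (l * t) ≤ ENNReal.ofReal (L * l ^ p) * φ x t) :
    ∀ f : (Fin N → ℝ) → ℝ, Measurable f →
      eLpNorm f (ENNReal.ofReal p) (volume.restrict Ω)
        ≤ ENNReal.ofReal ((2 * L * ((volume Ω).toReal + c)) ^ (1 / p))
            * luxNorm Ω φ f := by
  intro f hf
  have hΩ0 : 0 ≤ (volume Ω).toReal := ENNReal.toReal_nonneg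
  set Mr : ℝ := 2 * L * ((volume Ω).toReal + c) with hMr
  have hM2 : (2:ℝ) ≤ Mr := by nlinarith
  have hMpos : 0 < Mr := by linarith
  set Kr : ℝ := Mr ^ (1/p) with hKr
  have hKrpos : 0 < Kr := Real.rpow_pos_of_pos hMpos _
  have hp0 : 0 < p := lt_of_lt_of_le one_pos hp
  have hc0 : 0 < c := lt_of_lt_of_le one_pos hc
  have hL0 : 0 < L := lt_of_lt_of_le one_pos hL
  have hpE0 : ENNReal.ofReal p ≠ 0 := ne_of_gt (ENNReal.ofReal_pos.2 hp0)
  have hpEt : ENNReal.ofReal p ≠ ⊤ := ENNReal.ofReal_ne_top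
  have htr : (ENNReal.ofReal p).toReal = p := ENNReal.toReal_ofReal hp0.le
  have key : ∀ l : ℝ, 0 < l → gModular Ω φ (fun x => f x / l) ≤ 1 →
      eLpNorm f (ENNReal.ofReal p) (volume.restrict Ω)
        ≤ ENNReal.ofReal Kr * ENNReal.ofReal l := by
    intro l hl hmod
    set g : (Fin N → ℝ) → ℝ := fun x => f x / l with hg
    have hmeas_g : Measurable g := hf.div_const l
    have hmeasφ : Measurable fun x => φ x |g x| := hφ.1 g hmeas_g
    have hptwise : ∀ᵐ x ∂(volume.restrict Ω),
        ENNReal.ofReal |g x| ^ p ≤ 1 + ENNReal.ofReal (L * c) * φ x |g x| := by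
      filter_upwards [hanch, haInc] with x hx hx2
      rcases le_or_gt |g x| 1 with h1 | h1
      · calc ENNReal.ofReal |g x| ^ p ≤ 1 ^ p :=
            ENNReal.rpow_le_rpow (ENNReal.ofReal_le_one.2 h1) hp0.le
          _ = 1 := ENNReal.one_rpow p
          _ ≤ 1 + ENNReal.ofReal (L * c) * φ x |g x| := le_self_add
      · set t := |g x| with htdef
        have ht0 : 0 < t := lt_trans one_pos h1
        have htp0 : (0:ℝ) < t ^ p := Real.rpow_pos_of_pos ht0 p
        have h3 := hx2 t ht0.le (1/t) (by positivity) (by rw [div_le_one ht0]; linarith)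
        rw [one_div_mul_cancel ht0.ne'] at h3
        have h4 : ENNReal.ofReal (1/c) ≤ ENNReal.ofReal (L * (1/t) ^ p) * φ x t :=
          le_trans hx.1 h3
        have h5 := mul_le_mul_right h4 (ENNReal.ofReal (c * t ^ p))
        rw [← ENNReal.ofReal_mul (by positivity), ← mul_assoc,
          ← ENNReal.ofReal_mul (by positivity)] at h5
        have e1 : c * t ^ p * (1/c) = t ^ p := by field_simp
        have e2 : c * t ^ p * (L * (1/t) ^ p) = L * c := by
          rw [one_div, Real.inv_rpow ht0.le]
          field_simp
        rw [e1, e2] at h5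
        calc ENNReal.ofReal t ^ p = ENNReal.ofReal (t ^ p) :=
            ENNReal.ofReal_rpow_of_pos ht0
          _ ≤ ENNReal.ofReal (L * c) * φ x t := h5
          _ ≤ 1 + ENNReal.ofReal (L * c) * φ x t := le_add_self
    have hint1 : (∫⁻ x in Ω, ENNReal.ofReal |g x| ^ p) ≤ ENNReal.ofReal Mr := by
      calc (∫⁻ x in Ω, ENNReal.ofReal |g x| ^ p)
          ≤ ∫⁻ x in Ω, (1 + ENNReal.ofReal (L * c) * φ x |g x|) :=
            lintegral_mono_ae hptwise
        _ = volume Ω + ENNReal.ofReal (L * c) * gModular Ω φ g := by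
            rw [lintegral_add_left measurable_const,
              lintegral_const_mul _ hmeasφ]
            simp [gModular]
        _ ≤ volume Ω + ENNReal.ofReal (L * c) * 1 :=
            add_le_add_right (mul_le_mul_right hmod _) _
        _ ≤ ENNReal.ofReal Mr := by
            rw [mul_one, ← ENNReal.ofReal_toReal hΩ.ne,
              ← ENNReal.ofReal_add hΩ0 (by positivity)]
            exact ENNReal.ofReal_le_ofReal (by nlinarith)
    have hintf : (∫⁻ x in Ω, (‖f x‖₊ : ℝ≥0∞) ^ p) ≤ ENNReal.ofReal (l ^ p * Mr) := by
      have heq : ∀ x, (‖f x‖₊ : ℝ≥0∞) ^ p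
          = ENNReal.ofReal (l ^ p) * ENNReal.ofReal |g x| ^ p := by
        intro x
        have habs : |f x| = l * |g x| := by
          rw [hg]
          simp only [abs_div, abs_of_pos hl]
          rw [mul_div_cancel₀ _ hl.ne']
        rw [← enorm_eq_nnnorm, ← ofReal_norm, Real.norm_eq_abs, habs,
          ENNReal.ofReal_mul hl.le, ENNReal.mul_rpow_of_nonneg _ _ hp0.le,
          ENNReal.ofReal_rpow_of_pos hl]
      calc (∫⁻ x in Ω, (‖f x‖₊ : ℝ≥0∞) ^ p)
          = ∫⁻ x in Ω, ENNReal.ofReal (l ^ p) * ENNReal.ofReal |g x| ^ p := by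
            simp only [heq]
        _ = ENNReal.ofReal (l ^ p) * ∫⁻ x in Ω, ENNReal.ofReal |g x| ^ p :=
            lintegral_const_mul _
              ((ENNReal.measurable_ofReal.comp hmeas_g.abs).pow_const p)
        _ ≤ ENNReal.ofReal (l ^ p) * ENNReal.ofReal Mr :=
            mul_le_mul_right hint1 _
        _ = ENNReal.ofReal (l ^ p * Mr) := (ENNReal.ofReal_mul (by positivity)).symm
    rw [eLpNorm_eq_lintegral_rpow_enorm_toReal hpE0 hpEt, htr]
    calc (∫⁻ x, (‖f x‖₊ : ℝ≥0∞) ^ p ∂(volume.restrict Ω)) ^ (1/p)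
        ≤ (ENNReal.ofReal (l ^ p * Mr)) ^ (1/p) :=
          ENNReal.rpow_le_rpow hintf (by positivity)
      _ = ENNReal.ofReal ((l ^ p * Mr) ^ (1/p)) :=
          ENNReal.ofReal_rpow_of_pos (by positivity)
      _ = ENNReal.ofReal (l * Kr) := by
          rw [Real.mul_rpow (by positivity) hMpos.le, one_div,
            Real.rpow_rpow_inv hl.le hp0.ne', hKr, one_div]
      _ = ENNReal.ofReal Kr * ENNReal.ofReal l := by
          rw [ENNReal.ofReal_mul hl.le, mul_comm]
  have hKne0 : ENNReal.ofReal Kr ≠ 0 := ne_of_gt (ENNReal.ofReal_pos.2 hKrpos)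
  have hKnet : ENNReal.ofReal Kr ≠ ⊤ := ENNReal.ofReal_ne_top
  have hdiv : eLpNorm f (ENNReal.ofReal p) (volume.restrict Ω) / ENNReal.ofReal Kr
      ≤ luxNorm Ω φ f := by
    apply le_sInf
    rintro b ⟨l, ⟨hl, hmod⟩, rfl⟩
    exact ENNReal.div_le_of_le_mul ((key l hl hmod).trans_eq (mul_comm _ _))
  calc eLpNorm f (ENNReal.ofReal p) (volume.restrict Ω)
      = eLpNorm f (ENNReal.ofReal p) (volume.restrict Ω) / ENNReal.ofReal Kr
          * ENNReal.ofReal Kr := (ENNReal.div_mul_cancel hKne0 hKnet).symm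
    _ ≤ luxNorm Ω φ f * ENNReal.ofReal Kr := mul_le_mul_left hdiv _
    _ = ENNReal.ofReal Kr * luxNorm Ω φ f := mul_comm _ _
end

section
/- Limit of generalized Orlicz norms: Let Ω have finite measure, φ_n ∈ Φ_w(Ω), c, L ≥ 1, and p_n ≥ 1 with p_n → ∞. Assume for all n that 1/c ≤ φ_n(x,1) ≤ c for a.e. x, and φ_n satisfies (aInc)_{p_n} with constant L. Then for every u ∈ L^∞(Ω), lim_{n→∞} ‖u‖_{φ_n} = ‖u‖_{L^∞(Ω)}. -/
open MeasureTheory Set Filter Topology ENNReal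

/-- If `|Ω| < ∞`, `φ_n ∈ Φ_w(Ω)`, `1/c ≤ φ_n(x,1) ≤ c` a.e., each `φ_n`
satisfies `(aInc)_{p_n}` with a uniform constant `L`, and `p_n → ∞`, then for every
`u ∈ L^∞(Ω)` one has `lim_n ‖u‖_{φ_n} = ‖u‖_{L^∞(Ω)}`. -/
theorem luxNorm_tendsto_linfty {N : ℕ} (Ω : Set (Fin N → ℝ)) (hΩ : volume Ω < ⊤)
    (φ : ℕ → (Fin N → ℝ) → ℝ → ℝ≥0∞) (hφ : ∀ n, IsWeakPhi Ω (φ n))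
    (c L : ℝ) (hc : 1 ≤ c) (hL : 1 ≤ L) (p : ℕ → ℝ) (hp : ∀ n, 1 ≤ p n)
    (hptop : Tendsto p atTop atTop)
    (hanch : ∀ n, ∀ᵐ x ∂(volume.restrict Ω),
      ENNReal.ofReal (1 / c) ≤ φ n x 1 ∧ φ n x 1 ≤ ENNReal.ofReal c)
    (haInc : ∀ n, ∀ᵐ x ∂(volume.restrict Ω), ∀ t, 0 ≤ t → ∀ l, 0 ≤ l → l ≤ 1 →
      φ n x (l * t) ≤ ENNReal.ofReal (L * l ^ p n) * φ n x t)
    (u : (Fin N → ℝ) → ℝ) (hu : Measurable u)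
    (huL : eLpNorm u ⊤ (volume.restrict Ω) < ⊤) :
    Tendsto (fun n => luxNorm Ω (φ n) u) atTop
      (nhds (eLpNorm u ⊤ (volume.restrict Ω))) := by
  have hc0 : (0:ℝ) < c := by linarith
  have hL0 : (0:ℝ) < L := by linarith
  set μ := volume.restrict Ω with hμdef
  set M := eLpNorm u ⊤ μ with hMdef
  refine tendsto_order.2 ⟨?_, ?_⟩
  · -- lower bound: for all b < M, eventually b < luxNorm
    intro b hb
    obtain ⟨lam, _, hb_lam, hlam_M⟩ := ENNReal.lt_iff_exists_real_btwn.1 hb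
    obtain ⟨lam', _, hlam_lam', hlam'_M⟩ := ENNReal.lt_iff_exists_real_btwn.1 hlam_M
    have hlam0 : 0 < lam := ENNReal.ofReal_pos.1 (lt_of_le_of_lt (zero_le : 0 ≤ b) hb_lam)
    have hlamlt : lam < lam' := (ENNReal.ofReal_lt_ofReal_iff_of_nonneg hlam0.le).1 hlam_lam'
    set T : ℝ := lam' / lam with hTdef
    have hT1 : 1 < T := (one_lt_div hlam0).2 hlamlt
    have hT0 : (0:ℝ) < T := by linarith
    set A : Set (Fin N → ℝ) := {x | lam' ≤ |u x|} with hAdef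
    have hA : MeasurableSet A := measurableSet_le measurable_const hu.abs
    set δ : ℝ≥0∞ := μ A with hδdef
    have hδpos : 0 < δ := by
      rcases eq_or_lt_of_le (zero_le : 0 ≤ δ) with h | h
      · exfalso
        have hae : ∀ᵐ x ∂μ, ‖u x‖ ≤ lam' := by
          have hsub : {x | ¬ (‖u x‖ ≤ lam')} ⊆ A := by
            intro x hx
            simp only [Real.norm_eq_abs, not_le, mem_setOf_eq] at hx
            exact le_of_lt hx
          exact measure_mono_null hsub h.symm
        have := eLpNormEssSup_le_of_ae_bound hae
        rw [hMdef, eLpNorm_exponent_top] at hlam'_M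
        exact absurd (lt_of_lt_of_le hlam'_M this) (lt_irrefl _)
      · exact h
    have hδtop : δ < ⊤ := by
      refine lt_of_le_of_lt ?_ hΩ
      calc δ ≤ μ univ := measure_mono (subset_univ A)
        _ = volume Ω := by rw [hμdef, Measure.restrict_apply_univ]
    set δt : ℝ := δ.toReal with hδtdef
    have hδt0 : 0 < δt := ENNReal.toReal_pos hδpos.ne' hδtop.ne
    -- pointwise lower bound
    have hkey : ∀ n, ∀ᵐ x ∂μ, x ∈ A →
        ENNReal.ofReal (T ^ p n / (c * L)) ≤ φ n x (|u x| / lam) := by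
      intro n
      filter_upwards [haInc n, hanch n, (hφ n).2.1] with x hinc hanchx hphi
      intro hxA
      have hmono : MonotoneOn (φ n x) (Ici 0) := hphi.2.2.2
      have hpn0 : (0:ℝ) < p n := lt_of_lt_of_le one_pos (hp n)
      have hTp0 : (0:ℝ) < T ^ p n := Real.rpow_pos_of_pos hT0 _
      have h2 := hinc T hT0.le T⁻¹ (by positivity) (by
        rw [inv_le_one_iff₀]; right; linarith)
      rw [inv_mul_cancel₀ hT0.ne'] at h2
      have hBne : ENNReal.ofReal (L * T⁻¹ ^ p n) ≠ 0 := by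
        rw [Ne, ENNReal.ofReal_eq_zero, not_le]
        positivity
      have hBtop : ENNReal.ofReal (L * T⁻¹ ^ p n) ≠ ⊤ := ENNReal.ofReal_ne_top
      have h3 : ENNReal.ofReal (T ^ p n / (c * L)) ≤ φ n x T := by
        refine (ENNReal.mul_le_mul_iff_right hBne hBtop).1 ?_
        calc ENNReal.ofReal (L * T⁻¹ ^ p n) * ENNReal.ofReal (T ^ p n / (c * L))
            = ENNReal.ofReal (1 / c) := by
              rw [← ENNReal.ofReal_mul (by positivity)]
              congr 1
              rw [Real.inv_rpow hT0.le]
              field_simp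
          _ ≤ φ n x 1 := hanchx.1
          _ ≤ ENNReal.ofReal (L * T⁻¹ ^ p n) * φ n x T := h2
      refine h3.trans (hmono (mem_Ici.2 hT0.le) (mem_Ici.2 (by positivity)) ?_)
      rw [hTdef]
      exact div_le_div_of_nonneg_right hxA hlam0.le |>.trans_eq rfl
    -- modular lower bound
    have hmodlow : ∀ n, ENNReal.ofReal (T ^ p n / (c * L)) * δ ≤
        gModular Ω (φ n) (fun x => u x / lam) := by
      intro n
      rw [gModular, ← lintegral_indicator_const hA (ENNReal.ofReal (T ^ p n / (c * L)))]
      refine lintegral_mono_ae ?_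
      filter_upwards [hkey n] with x hx
      by_cases hxA : x ∈ A
      · rw [indicator_of_mem hxA]
        have : |u x / lam| = |u x| / lam := by
          rw [abs_div, abs_of_pos hlam0]
        rw [this]
        exact hx hxA
      · rw [indicator_of_notMem hxA]; exact zero_le
    -- eventually modular > 1
    have htend : Tendsto (fun n => T ^ p n / (c * L)) atTop atTop := by
      have h : Tendsto (fun y : ℝ => T ^ y) atTop atTop := by
        simp_rw [Real.rpow_def_of_pos hT0]
        exact Real.tendsto_exp_atTop.comp (Tendsto.const_mul_atTop (Real.log_pos hT1) tendsto_id)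
      exact (h.comp hptop).atTop_div_const (by positivity)
    have hev : ∀ᶠ n in atTop, (1:ℝ≥0∞) < gModular Ω (φ n) (fun x => u x / lam) := by
      filter_upwards [htend.eventually_ge_atTop (2 / δt)] with n hn
      refine lt_of_lt_of_le ?_ (hmodlow n)
      have hδeq : δ = ENNReal.ofReal δt := (ENNReal.ofReal_toReal hδtop.ne).symm
      calc (1:ℝ≥0∞) < 2 := one_lt_two
        _ = ENNReal.ofReal (2 / δt) * ENNReal.ofReal δt := by
            rw [← ENNReal.ofReal_mul (by positivity)]
            rw [div_mul_cancel₀ _ hδt0.ne']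
            norm_num
        _ ≤ ENNReal.ofReal (T ^ p n / (c * L)) * δ := by
            rw [hδeq]
            exact mul_le_mul_left (ENNReal.ofReal_le_ofReal hn) _
    filter_upwards [hev] with n hn
    refine lt_of_lt_of_le hb_lam (le_sInf ?_)
    rintro z ⟨l, ⟨hl0, hlmod⟩, rfl⟩
    rcases le_or_gt lam l with h | h
    · exact ENNReal.ofReal_le_ofReal h
    · exfalso
      have hmono : gModular Ω (φ n) (fun x => u x / lam) ≤
          gModular Ω (φ n) (fun x => u x / l) := by
        rw [gModular, gModular]
        refine lintegral_mono_ae ?_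
        filter_upwards [(hφ n).2.1] with x hphi
        have hm : MonotoneOn (φ n x) (Ici 0) := hphi.2.2.2
        have e1 : |u x / lam| = |u x| / lam := by rw [abs_div, abs_of_pos hlam0]
        have e2 : |u x / l| = |u x| / l := by rw [abs_div, abs_of_pos hl0]
        rw [e1, e2]
        refine hm (mem_Ici.2 (by positivity)) (mem_Ici.2 (by positivity)) ?_
        exact div_le_div_of_nonneg_left (abs_nonneg _) hl0 h.le
      exact absurd (hlmod) (not_le.2 (lt_of_lt_of_le hn hmono))
  · -- upper bound: for all b > M, eventually luxNorm < b
    intro b hb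
    obtain ⟨lam, _, hM_lam, hlam_b⟩ := ENNReal.lt_iff_exists_real_btwn.1 hb
    obtain ⟨lam0, _, hM_lam0, hlam0_lam⟩ := ENNReal.lt_iff_exists_real_btwn.1 hM_lam
    have hlam00 : 0 < lam0 := ENNReal.ofReal_pos.1 (lt_of_le_of_lt (zero_le : 0 ≤ M) hM_lam0)
    have hlamlt : lam0 < lam := (ENNReal.ofReal_lt_ofReal_iff_of_nonneg hlam00.le).1 hlam0_lam
    have hlam0 : 0 < lam := by linarith
    set θ : ℝ := lam0 / lam with hθdef
    have hθ0 : 0 < θ := by positivity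
    have hθ1 : θ < 1 := (div_lt_one hlam0).2 hlamlt
    have habs : ∀ᵐ x ∂μ, |u x| ≤ lam0 := by
      filter_upwards [ae_le_eLpNormEssSup (f := u) (μ := μ)] with x hx
      have h1 : ENNReal.ofReal |u x| ≤ M := by
        rw [hMdef, eLpNorm_exponent_top, ← Real.norm_eq_abs, ofReal_norm]
        exact hx
      have h2 : ENNReal.ofReal |u x| < ENNReal.ofReal lam0 := lt_of_le_of_lt h1 hM_lam0
      exact le_of_lt ((ENNReal.ofReal_lt_ofReal_iff hlam00).1 h2)
    have hbound : ∀ n, ∀ᵐ x ∂μ, φ n x |u x / lam| ≤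
        ENNReal.ofReal (L * θ ^ p n * c) := by
      intro n
      filter_upwards [haInc n, hanch n, habs] with x hinc hanchx hux
      have heq : |u x / lam| = |u x| / lam := by rw [abs_div, abs_of_pos hlam0]
      rw [heq]
      set l : ℝ := |u x| / lam with hldef
      have hl0 : 0 ≤ l := by positivity
      have hlθ : l ≤ θ := div_le_div_of_nonneg_right hux hlam0.le |>.trans_eq rfl
      have hl1 : l ≤ 1 := hlθ.trans hθ1.le
      have h2 := hinc 1 zero_le_one l hl0 hl1
      rw [mul_one] at h2
      calc φ n x l ≤ ENNReal.ofReal (L * l ^ p n) * φ n x 1 := h2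
        _ ≤ ENNReal.ofReal (L * θ ^ p n) * ENNReal.ofReal c := by
            refine mul_le_mul' (ENNReal.ofReal_le_ofReal ?_) hanchx.2
            have := Real.rpow_le_rpow hl0 hlθ (by linarith [hp n] : (0:ℝ) ≤ p n)
            nlinarith
        _ = ENNReal.ofReal (L * θ ^ p n * c) := by
            rw [← ENNReal.ofReal_mul (by positivity)]
    have hmodup : ∀ n, gModular Ω (φ n) (fun x => u x / lam) ≤
        ENNReal.ofReal (L * θ ^ p n * c) * volume Ω := by
      intro n
      rw [gModular]
      calc ∫⁻ x in Ω, φ n x |u x / lam| ≤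
          ∫⁻ _ in Ω, ENNReal.ofReal (L * θ ^ p n * c) := lintegral_mono_ae (hbound n)
        _ = ENNReal.ofReal (L * θ ^ p n * c) * volume Ω := setLIntegral_const Ω _
    set Vt : ℝ := (volume Ω).toReal with hVtdef
    have hVΩ : volume Ω ≤ ENNReal.ofReal (Vt + 1) := by
      rw [← ENNReal.ofReal_toReal hΩ.ne]
      exact ENNReal.ofReal_le_ofReal (by linarith)
    have hVt0 : 0 ≤ Vt := ENNReal.toReal_nonneg
    have hε : (0:ℝ) < (Vt + 1)⁻¹ := by positivity
    have htend : Tendsto (fun n => L * θ ^ p n * c) atTop (nhds 0) := by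
      have h := (tendsto_rpow_atTop_of_base_lt_one θ (by linarith) hθ1).comp hptop
      have := h.const_mul L
      simpa using this.mul_const c
    have hev : ∀ᶠ n in atTop, gModular Ω (φ n) (fun x => u x / lam) ≤ 1 := by
      filter_upwards [htend.eventually_le_const hε] with n hn
      refine (hmodup n).trans ?_
      calc ENNReal.ofReal (L * θ ^ p n * c) * volume Ω
          ≤ ENNReal.ofReal ((Vt + 1)⁻¹) * ENNReal.ofReal (Vt + 1) :=
            mul_le_mul' (ENNReal.ofReal_le_ofReal hn) hVΩ
        _ = ENNReal.ofReal ((Vt + 1)⁻¹ * (Vt + 1)) := (ENNReal.ofReal_mul (by positivity)).symm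
        _ = 1 := by rw [inv_mul_cancel₀ (by linarith)]; norm_num
    filter_upwards [hev] with n hn
    refine lt_of_le_of_lt ?_ hlam_b
    exact sInf_le ⟨lam, ⟨hlam0, hn⟩, rfl⟩
end

section
/- Lower bound half of the norm limit: under the assumptions above (|Ω|<∞, 1/c ≤ φ_n(x,1) ≤ c, (aInc)_{p_n} with uniform constant L, p_n → ∞), for every u ∈ L^∞(Ω) one has liminf_{n→∞} ‖u‖_{φ_n} ≥ ‖u‖_∞, since ‖u‖_{L^{p_n}} ≤ (2L(|Ω|+c))^{1/p_n} ‖u‖_{φ_n} and ‖u‖_{L^{p_n}} → ‖u‖_∞. -/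
set_option maxHeartbeats 800000
open MeasureTheory Set Filter Topology ENNReal

/-- **Lower bound half of the norm limit.** Under the assumptions of the
norm-limit theorem (`|Ω| < ∞`, `1/c ≤ φ_n(x,1) ≤ c` a.e., `(aInc)_{p_n}` with uniform
constant `L`, `p_n → ∞`), for every `u ∈ L^∞(Ω)` one has
`liminf_n ‖u‖_{φ_n} ≥ ‖u‖_∞`. -/
theorem luxNorm_liminf_ge {N : ℕ} (Ω : Set (Fin N → ℝ)) (hΩ : volume Ω < ⊤)
    (φ : ℕ → (Fin N → ℝ) → ℝ → ℝ≥0∞) (hφ : ∀ n, IsWeakPhi Ω (φ n))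
    (c L : ℝ) (hc : 1 ≤ c) (hL : 1 ≤ L) (p : ℕ → ℝ) (hp : ∀ n, 1 ≤ p n)
    (hptop : Tendsto p atTop atTop)
    (hanch : ∀ n, ∀ᵐ x ∂(volume.restrict Ω),
      ENNReal.ofReal (1 / c) ≤ φ n x 1 ∧ φ n x 1 ≤ ENNReal.ofReal c)
    (haInc : ∀ n, ∀ᵐ x ∂(volume.restrict Ω), ∀ t, 0 ≤ t → ∀ l, 0 ≤ l → l ≤ 1 →
      φ n x (l * t) ≤ ENNReal.ofReal (L * l ^ p n) * φ n x t)
    (u : (Fin N → ℝ) → ℝ) (hu : Measurable u)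
    (huL : eLpNorm u ⊤ (volume.restrict Ω) < ⊤) :
    eLpNorm u ⊤ (volume.restrict Ω)
      ≤ Filter.liminf (fun n => luxNorm Ω (φ n) u) atTop := by
  set μ := volume.restrict Ω with hμ
  set M := eLpNorm u ⊤ μ with hM
  have hc0 : (0:ℝ) < c := lt_of_lt_of_le one_pos hc
  have hL0 : (0:ℝ) < L := lt_of_lt_of_le one_pos hL
  -- it suffices to show b ≤ liminf for all b < M
  refine le_of_forall_lt_imp_le_of_dense fun b hb => ?_
  rcases eq_or_ne b 0 with rfl | hb0
  · exact zero_le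
  have hbtop : b ≠ ⊤ := (hb.trans huL).ne
  set t := b.toReal with ht
  have ht0 : 0 < t := ENNReal.toReal_pos hb0 hbtop
  have htM : t < M.toReal := by
    exact (ENNReal.toReal_lt_toReal hbtop huL.ne).mpr hb
  set t' := (t + M.toReal) / 2 with ht'
  have htt' : t < t' := by
    rw [ht']; linarith
  have ht'M : t' < M.toReal := by
    rw [ht']; linarith
  have ht'0 : 0 < t' := ht0.trans htt'
  -- the set where |u| > t' has positive measure
  set S := {x | t' < |u x|} with hS
  have hSmeas : MeasurableSet S := measurableSet_lt measurable_const hu.abs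
  have haS : 0 < μ S := by
    rcases (zero_le : 0 ≤ μ S).lt_or_eq with h | h
    · exact h
    · exfalso
      have hae : ∀ᵐ x ∂μ, |u x| ≤ t' := by
        rw [ae_iff]
        convert h.symm using 2
        ext x; simp [hS, not_le]
      have hMle : M ≤ ENNReal.ofReal t' := by
        rw [hM, eLpNorm_exponent_top, eLpNormEssSup]
        refine essSup_le_of_ae_le _ (hae.mono fun x hx => ?_)
        show (‖u x‖₊ : ℝ≥0∞) ≤ ENNReal.ofReal t'
        rw [show (‖u x‖₊ : ℝ≥0∞) = ENNReal.ofReal ‖u x‖ from (ofReal_norm (u x)).symm, Real.norm_eq_abs]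
        exact ENNReal.ofReal_le_ofReal hx
      have := ENNReal.toReal_le_of_le_ofReal ht'0.le hMle
      linarith
  have haStop : μ S ≠ ⊤ := by
    refine ne_of_lt (lt_of_le_of_lt (le_trans (measure_mono (subset_univ S)) ?_) hΩ)
    simp [hμ, Measure.restrict_apply_univ]
  have haS0 : 0 < (μ S).toReal := ENNReal.toReal_pos haS.ne' haStop
  -- eventual bound on (t'/t)^(p n)
  have hr1 : 1 < t' / t := (one_lt_div ht0).mpr htt'
  have hrt : Tendsto (fun n => (t'/t) ^ (p n)) atTop atTop := by
    have h1 : Tendsto (fun x : ℝ => (t'/t) ^ x) atTop atTop := by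
      have h2 : Tendsto (fun x : ℝ => Real.exp (Real.log (t'/t) * x)) atTop atTop :=
        Real.tendsto_exp_atTop.comp
          ((tendsto_const_mul_atTop_of_pos (Real.log_pos hr1)).mpr tendsto_id)
      refine h2.congr fun x => ?_
      rw [Real.rpow_def_of_pos (by linarith : (0:ℝ) < t'/t)]
    exact h1.comp hptop
  have hev : ∀ᶠ n in atTop, L * c / (μ S).toReal < (t'/t) ^ (p n) :=
    hrt.eventually (eventually_gt_atTop _)
  -- conclude: eventually ofReal t ≤ luxNorm
  have hb_eq : b = ENNReal.ofReal t := (ENNReal.ofReal_toReal hbtop).symm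
  rw [hb_eq]
  refine le_liminf_of_le (by isBoundedDefault) (hev.mono fun n hn => ?_)
  -- for such n, every admissible l satisfies t ≤ l
  refine le_sInf fun e he => ?_
  obtain ⟨l, ⟨hl0, hmod⟩, rfl⟩ := he
  refine ENNReal.ofReal_le_ofReal ?_
  by_contra hlt
  push_neg at hlt
  -- l < t; set s := t'/l > t'/t > 1
  set s := t' / l with hs
  have hs1 : 1 < s := by
    rw [hs]
    exact (one_lt_div hl0).mpr (htt'.trans' hlt)
  have hs0 : 0 < s := one_pos.trans hs1
  have hsr : t'/t ≤ s := by
    rw [hs]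
    gcongr
  have hspn : L * c / (μ S).toReal < s ^ (p n) := by
    refine hn.trans_le (Real.rpow_le_rpow (by positivity) hsr (by linarith [hp n]))
  -- pointwise lower bound on S
  have hptB : ∀ᵐ x ∂μ, x ∈ S → ENNReal.ofReal (s ^ (p n) / (L * c)) ≤ φ n x |u x / l| := by
    filter_upwards [(hφ n).2.1, haInc n, hanch n] with x hmono haI hanc hxS
    have hmono' := hmono.2.2.2
    have hsx : s ≤ |u x / l| := by
      rw [abs_div, abs_of_pos hl0, hs]
      gcongr
      exact hxS.le
    have h1 : φ n x 1 ≤ ENNReal.ofReal (L * s⁻¹ ^ (p n)) * φ n x s := by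
      have := haI s hs0.le s⁻¹ (by positivity) (by
        rw [inv_le_one_iff₀]; right; exact hs1.le)
      rwa [inv_mul_cancel₀ hs0.ne'] at this
    have h2 : ENNReal.ofReal (1/c) ≤ ENNReal.ofReal (L * s⁻¹ ^ (p n)) * φ n x s :=
      le_trans hanc.1 h1
    have hkey : ENNReal.ofReal (s ^ (p n) / (L * c)) ≤ φ n x s := by
      have hpos : (0:ℝ) < L * s⁻¹ ^ (p n) := by positivity
      have hfac : ENNReal.ofReal (1/c)
          = ENNReal.ofReal (s ^ (p n) / (L * c)) * ENNReal.ofReal (L * s⁻¹ ^ (p n)) := by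
        rw [← ENNReal.ofReal_mul (by positivity)]
        congr 1
        rw [Real.inv_rpow hs0.le]
        have hspn0 : (0:ℝ) < s ^ (p n) := Real.rpow_pos_of_pos hs0 _
        field_simp
      have h3 : ENNReal.ofReal (s ^ (p n) / (L * c)) * ENNReal.ofReal (L * s⁻¹ ^ (p n))
          ≤ φ n x s * ENNReal.ofReal (L * s⁻¹ ^ (p n)) := by
        rw [← hfac, mul_comm (φ n x s)]; exact h2
      exact (ENNReal.mul_le_mul_iff_left (ENNReal.ofReal_pos.mpr hpos).ne'
        ENNReal.ofReal_ne_top).mp h3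
    refine hkey.trans (hmono' (Set.mem_Ici.mpr hs0.le) ?_ hsx)
    exact le_trans (by positivity : (0:ℝ) ≤ s) hsx
  -- integrate
  have hmeas : Measurable fun x => φ n x |u x / l| :=
    (hφ n).1 (fun x => u x / l) (hu.div_const l)
  have hint : ENNReal.ofReal (s ^ (p n) / (L * c)) * μ S ≤ 1 := by
    calc ENNReal.ofReal (s ^ (p n) / (L * c)) * μ S
        = ∫⁻ _ in S, ENNReal.ofReal (s ^ (p n) / (L * c)) ∂μ := by
          rw [setLIntegral_const]
      _ ≤ ∫⁻ x in S, φ n x |u x / l| ∂μ :=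
          setLIntegral_mono_ae hmeas.aemeasurable.restrict hptB
      _ ≤ ∫⁻ x, φ n x |u x / l| ∂μ := setLIntegral_le_lintegral _ _
      _ ≤ 1 := hmod
  -- derive contradiction
  have : s ^ (p n) / (L * c) * (μ S).toReal ≤ 1 := by
    rw [← ENNReal.ofReal_le_one, ENNReal.ofReal_mul (by positivity)]
    calc ENNReal.ofReal (s ^ (p n) / (L * c)) * ENNReal.ofReal ((μ S).toReal)
        = ENNReal.ofReal (s ^ (p n) / (L * c)) * μ S := by
          rw [ENNReal.ofReal_toReal haStop]
      _ ≤ 1 := hint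
  have hgt : 1 < s ^ (p n) / (L * c) * (μ S).toReal := by
    rw [div_mul_eq_mul_div, lt_div_iff₀ (by positivity), one_mul]
    calc L * c = L * c / (μ S).toReal * (μ S).toReal := by field_simp
      _ < s ^ (p n) * (μ S).toReal := by
          exact mul_lt_mul_of_pos_right hspn haS0
  linarith
end

section
/- Monotonicity of power envelopes: Let f: ℝ^{Nd} → [0,∞) be Borel and for n ≥ 1 let Qf^n denote the quasiconvex envelope of f^n (the supremum of all quasiconvex functions h ≤ f^n). Then the sequence n ↦ (Qf^n)^{1/n}(ξ) is nondecreasing in n for every ξ, so Q_∞f(ξ) := sup_{n≥1} (Qf^n)^{1/n}(ξ) is well defined and Q_∞ f ≤ f. -/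
open MeasureTheory Set Filter

/-- The open unit cube `(0,1)^N`. -/
def unitCube (N : ℕ) : Set (Fin N → ℝ) := univ.pi fun _ => Ioo (0 : ℝ) 1

/-- Morrey quasiconvexity of `g : ℝ^{Nd} → ℝ` (identifying `ℝ^{Nd}` with the space of
linear maps `ℝ^N → ℝ^d`): `g(ξ) ≤ ∫_{(0,1)^N} g(ξ + Du(x)) dx` for every `ξ` and every
Lipschitz test function `u ∈ W^{1,∞}_0((0,1)^N; ℝ^d)`. -/
def MorreyQuasiconvex {N d : ℕ} (g : ((Fin N → ℝ) →L[ℝ] (Fin d → ℝ)) → ℝ) : Prop :=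
  ∀ ξ, ∀ u : (Fin N → ℝ) → (Fin d → ℝ),
    (∃ K, LipschitzWith K u) → (∀ x ∉ unitCube N, u x = 0) →
    g ξ ≤ ∫ x in unitCube N, g (ξ + fderiv ℝ u x)

/-- The quasiconvex envelope `Qg = sup{h quasiconvex : h ≤ g}`, pointwise. -/
noncomputable def qcEnvelope {N d : ℕ} (g : ((Fin N → ℝ) →L[ℝ] (Fin d → ℝ)) → ℝ) :
    ((Fin N → ℝ) →L[ℝ] (Fin d → ℝ)) → ℝ :=
  fun ξ => sSup {y : ℝ | ∃ h, MorreyQuasiconvex h ∧ (∀ z, h z ≤ g z) ∧ y = h ξ}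

lemma volume_unitCube (N : ℕ) : MeasureTheory.volume (unitCube N) = 1 := by
  simp [unitCube, volume_pi_pi, Real.volume_Ioo]

lemma qc_const (N d : ℕ) (k : ℝ) :
    MorreyQuasiconvex (N := N) (d := d) (fun _ => k) := by
  intro ξ u _ _
  rw [setIntegral_const, measureReal_def, volume_unitCube]
  simp

lemma qc_affine {N d : ℕ} {h : ((Fin N → ℝ) →L[ℝ] (Fin d → ℝ)) → ℝ}
    (hqc : MorreyQuasiconvex h) (c K : ℝ) (hc : 0 ≤ c) (hK : 0 ≤ K) :
    MorreyQuasiconvex (fun z => c * h z - K) := by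
  intro ξ u hu hu0
  have base := hqc ξ u hu hu0
  set g : (Fin N → ℝ) → ℝ := fun x => h (ξ + fderiv ℝ u x) with hg
  by_cases hint : IntegrableOn g (unitCube N)
  · have hKint : IntegrableOn (fun _ : Fin N → ℝ => K) (unitCube N) := by
      exact integrableOn_const (by rw [volume_unitCube]; exact ENNReal.one_ne_top)
    have h1 : ∫ x in unitCube N, (c * g x - K) =
        c * (∫ x in unitCube N, g x) - K := by
      rw [integral_sub (hint.const_mul c) hKint, MeasureTheory.integral_const_mul,
        setIntegral_const, measureReal_def, volume_unitCube]
      simp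
    show c * h ξ - K ≤ _
    rw [h1]
    have : c * h ξ ≤ c * ∫ x in unitCube N, g x := mul_le_mul_of_nonneg_left base hc
    linarith
  · rcases eq_or_lt_of_le hc with hc0 | hc0
    · have : (fun x : Fin N → ℝ => c * g x - K) = fun _ => -K := by
        funext x; rw [← hc0]; ring
      show c * h ξ - K ≤ ∫ x in unitCube N, (c * g x - K)
      rw [this, setIntegral_const, measureReal_def, volume_unitCube, ← hc0]
      simp
    · have hnint2 : ¬ IntegrableOn (fun x => c * g x - K) (unitCube N) := by
        intro hI
        apply hint
        have hKint : IntegrableOn (fun _ : Fin N → ℝ => K) (unitCube N) := by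
          exact integrableOn_const (by rw [volume_unitCube]; exact ENNReal.one_ne_top)
        have h2 : IntegrableOn (fun x => c * g x) (unitCube N) := by
          have h2' := hI.add hKint
          have : ((fun x => c * g x - K) + fun _ => K) = fun x => c * g x := by
            funext x; simp
          rwa [this] at h2'
        have h3 := h2.const_mul c⁻¹
        exact (by simpa [inv_mul_cancel_left₀ (ne_of_gt hc0)] using h3 : Integrable (fun x => g x) (volume.restrict (unitCube N)))
      have hz : (∫ x in unitCube N, (c * g x - K)) = 0 := integral_undef hnint2
      have hgz : (∫ x in unitCube N, g x) = 0 := integral_undef hint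
      show c * h ξ - K ≤ _
      rw [hz]
      rw [hgz] at base
      nlinarith

lemma amgm (m n : ℕ) (hm : 1 ≤ m) (hmn : m ≤ n) (a t : ℝ) (ha : 0 ≤ a) (ht : 0 ≤ t) :
    (n : ℝ) * a ^ (n - m) * t ^ m ≤ m * t ^ n + ((n : ℝ) - m) * a ^ n := by
  have hn0 : 0 < n := lt_of_lt_of_le hm hmn
  have hn : (0:ℝ) < n := by exact_mod_cast hn0
  have hmn' : (m:ℝ) ≤ n := by exact_mod_cast hmn
  have key := Real.geom_mean_le_arith_mean2_weighted
    (w₁ := (m:ℝ)/n) (w₂ := ((n:ℝ)-m)/n) (p₁ := t^n) (p₂ := a^n)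
    (by positivity) (by apply div_nonneg <;> linarith) (by positivity) (by positivity)
    (by field_simp; ring)
  have l1 : (t^n : ℝ) ^ ((m:ℝ)/n) = t ^ m := by
    rw [← Real.rpow_natCast t n, ← Real.rpow_mul ht,
      mul_div_cancel₀ _ (ne_of_gt hn), Real.rpow_natCast]
  have l2 : (a^n : ℝ) ^ (((n:ℝ)-m)/n) = a ^ (n - m) := by
    rw [← Real.rpow_natCast a n, ← Real.rpow_mul ha]
    rw [show (n:ℝ) * (((n:ℝ)-m)/n) = ((n-m : ℕ) : ℝ) by
      push_cast [Nat.cast_sub hmn]; field_simp]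
    rw [Real.rpow_natCast]
  rw [l1, l2] at key
  have key2 : (n:ℝ) * (t^m * a^(n-m)) ≤ (n:ℝ) * ((m:ℝ)/n * t^n + ((n:ℝ)-m)/n * a^n) :=
    mul_le_mul_of_nonneg_left key hn.le
  calc (n : ℝ) * a ^ (n - m) * t ^ m = (n:ℝ) * (t^m * a^(n-m)) := by ring
    _ ≤ (n:ℝ) * ((m:ℝ)/n * t^n + ((n:ℝ)-m)/n * a^n) := key2
    _ = m * t ^ n + ((n : ℝ) - m) * a ^ n := by field_simp

/-- the envelope set of `f^k` at `ξ`. -/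
lemma qcSet_facts {N d : ℕ} (f : ((Fin N → ℝ) →L[ℝ] (Fin d → ℝ)) → ℝ)
    (hnonneg : ∀ ξ, 0 ≤ f ξ) (k : ℕ) (ξ : (Fin N → ℝ) →L[ℝ] (Fin d → ℝ)) :
    (0 : ℝ) ∈ {y : ℝ | ∃ h, MorreyQuasiconvex h ∧ (∀ z, h z ≤ f z ^ k) ∧ y = h ξ} ∧
    BddAbove {y : ℝ | ∃ h, MorreyQuasiconvex h ∧ (∀ z, h z ≤ f z ^ k) ∧ y = h ξ} ∧
    0 ≤ qcEnvelope (fun z => f z ^ k) ξ ∧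
    qcEnvelope (fun z => f z ^ k) ξ ≤ f ξ ^ k := by
  have hmem : (0 : ℝ) ∈ {y : ℝ | ∃ h, MorreyQuasiconvex h ∧ (∀ z, h z ≤ f z ^ k) ∧ y = h ξ} :=
    ⟨fun _ => 0, qc_const N d 0, fun z => pow_nonneg (hnonneg z) k, rfl⟩
  have hbdd : BddAbove {y : ℝ | ∃ h, MorreyQuasiconvex h ∧ (∀ z, h z ≤ f z ^ k) ∧ y = h ξ} := by
    refine ⟨f ξ ^ k, ?_⟩
    rintro y ⟨h, _, hle, rfl⟩
    exact hle ξ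
  refine ⟨hmem, hbdd, le_csSup hbdd hmem, csSup_le ⟨0, hmem⟩ ?_⟩
  rintro y ⟨h, _, hle, rfl⟩
  exact hle ξ

/-- **Monotonicity of power envelopes.** For Borel `f ≥ 0`, the sequence
`n ↦ (Qf^n)^{1/n}(ξ)` is nondecreasing in `n ≥ 1` at every `ξ`, so
`Q_∞f(ξ) := sup_{n≥1} (Qf^n)^{1/n}(ξ)` is well defined and `Q_∞f ≤ f`. -/
theorem qcEnvelope_pow_monotone {N d : ℕ}
    (f : ((Fin N → ℝ) →L[ℝ] (Fin d → ℝ)) → ℝ)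
    (hmeas : Measurable f) (hnonneg : ∀ ξ, 0 ≤ f ξ) :
    (∀ m n : ℕ, 1 ≤ m → m ≤ n → ∀ ξ,
      (qcEnvelope (fun z => f z ^ m) ξ) ^ (1 / (m : ℝ))
        ≤ (qcEnvelope (fun z => f z ^ n) ξ) ^ (1 / (n : ℝ))) ∧
    (∀ ξ, sSup {y : ℝ | ∃ n : ℕ, 1 ≤ n ∧
        y = (qcEnvelope (fun z => f z ^ n) ξ) ^ (1 / (n : ℝ))} ≤ f ξ) := by
  constructor
  · intro m n hm hmn ξ
    have hn1 : 1 ≤ n := le_trans hm hmn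
    have hm0 : m ≠ 0 := by omega
    have hn0 : n ≠ 0 := by omega
    have hmR : (0:ℝ) < m := by exact_mod_cast hm
    have hnR : (0:ℝ) < n := by exact_mod_cast hn1
    have hmnR : (m:ℝ) ≤ n := by exact_mod_cast hmn
    obtain ⟨hmemM, hbddM, hA0, hAle⟩ := qcSet_facts f hnonneg m ξ
    obtain ⟨hmemN, hbddN, hB0, hBle⟩ := qcSet_facts f hnonneg n ξ
    set A := qcEnvelope (fun z => f z ^ m) ξ with hA
    set B := qcEnvelope (fun z => f z ^ n) ξ with hB
    set a : ℝ := A ^ (1 / (m:ℝ)) with ha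
    have ha0 : 0 ≤ a := Real.rpow_nonneg hA0 _
    have ham : a ^ m = A := by
      rw [ha, one_div]; exact Real.rpow_inv_natCast_pow hA0 hm0
    -- coefficients
    set c : ℝ := (n:ℝ)/m * a^(n-m) with hc
    set K : ℝ := ((n:ℝ)-m)/m * a^n with hK
    have hc0 : 0 ≤ c := by positivity
    have hK0 : 0 ≤ K := by
      apply mul_nonneg (div_nonneg (by linarith) hmR.le) (pow_nonneg ha0 n)
    -- pointwise bound
    have pointP : ∀ t : ℝ, 0 ≤ t → c * t^m - K ≤ t^n := by
      intro t ht
      have H := amgm m n hm hmn a t ha0 ht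
      have h2 : c * t^m - K = ((n:ℝ)*a^(n-m)*t^m - ((n:ℝ)-m)*a^n)/m := by
        rw [hc, hK]; field_simp
      rw [h2, div_le_iff₀ hmR]
      nlinarith [H]
    -- for each member y of the m-set, c*y - K is in the n-set
    have step : ∀ y ∈ {y : ℝ | ∃ h, MorreyQuasiconvex h ∧ (∀ z, h z ≤ f z ^ m) ∧ y = h ξ},
        c * y - K ≤ B := by
      rintro y ⟨h, hqc, hle, rfl⟩
      refine le_csSup hbddN ⟨fun z => c * h z - K, qc_affine hqc c K hc0 hK0, ?_, rfl⟩
      intro z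
      calc c * h z - K ≤ c * (f z ^ m) - K := by
            have := mul_le_mul_of_nonneg_left (hle z) hc0; linarith
        _ ≤ f z ^ n := pointP (f z) (hnonneg z)
    -- hence c*A - K ≤ B
    have hcAK : c * A - K ≤ B := by
      rcases eq_or_lt_of_le hc0 with hcz | hcpos
      · rw [← hcz]; simp; linarith
      · have : A ≤ (B + K)/c := by
          apply csSup_le ⟨0, hmemM⟩
          intro y hy
          have := step y hy
          rw [le_div_iff₀ hcpos]
          linarith [step y hy]
        have := mul_le_mul_of_nonneg_left this hc0
        rw [mul_div_cancel₀ _ (ne_of_gt hcpos)] at this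
        linarith
    -- compute c*A - K = a^n
    have hcomp : c * A - K = a ^ n := by
      rw [← ham, hc, hK]
      have hpow : a^(n-m) * a^m = a^n := by rw [← pow_add, Nat.sub_add_cancel hmn]
      field_simp
      nlinarith [hpow]
    have keyn : a ^ n ≤ B := by rw [← hcomp]; exact hcAK
    -- conclude
    calc A ^ (1 / (m:ℝ)) = a := rfl
      _ = (a ^ n) ^ (1 / (n:ℝ)) := by
          rw [one_div, Real.pow_rpow_inv_natCast ha0 hn0]
      _ ≤ B ^ (1 / (n:ℝ)) :=
          Real.rpow_le_rpow (pow_nonneg ha0 n) keyn (by positivity)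
  · intro ξ
    apply Real.sSup_le _ (hnonneg ξ)
    rintro y ⟨n, hn1, rfl⟩
    have hn0 : n ≠ 0 := by omega
    obtain ⟨_, _, hB0, hBle⟩ := qcSet_facts f hnonneg n ξ
    calc (qcEnvelope (fun z => f z ^ n) ξ) ^ (1 / (n:ℝ))
        ≤ (f ξ ^ n) ^ (1 / (n:ℝ)) := Real.rpow_le_rpow hB0 hBle (by positivity)
      _ = f ξ := by rw [one_div]; exact Real.pow_rpow_inv_natCast (hnonneg ξ) hn0
end

section
/- Ratio control for variable exponent powers: Let 0 < |Ω| < ∞, p_n bounded variable exponents with p_n⁻ → ∞ and p_n⁺/p_n⁻ ≤ β for all n, and let v: Ω → [0,∞) be measurable with ess sup v = 1. Then lim_{n→∞} (∫_Ω v(x)^{p_n(x)} dx)^{1/p_n⁺} = 1 and lim_{n→∞} (∫_Ω v(x)^{p_n(x)} dx)^{1/p_n⁻} = 1. -/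
open MeasureTheory Set Filter Topology ENNReal

private lemma tendsto_rpow_one_div_aux {x : ℝ≥0∞} (hx0 : x ≠ 0) (hxt : x ≠ ⊤)
    {c : ℕ → ℝ} (hc : Tendsto c atTop atTop) :
    Tendsto (fun n => x ^ (1 / c n)) atTop (nhds 1) := by
  have hr : 0 < x.toReal := ENNReal.toReal_pos hx0 hxt
  have ht : Tendsto (fun n => 1 / c n) atTop (nhds 0) := by
    simp only [one_div]; exact hc.inv_tendsto_atTop
  have hreal : Tendsto (fun n => x.toReal ^ (1 / c n)) atTop (nhds 1) := by
    have h1 : Tendsto (fun n => Real.exp (Real.log x.toReal * (1 / c n))) atTop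
        (nhds (Real.exp (Real.log x.toReal * 0))) :=
      (Real.continuous_exp.tendsto _).comp (ht.const_mul _)
    simp only [mul_zero, Real.exp_zero] at h1
    refine h1.congr fun n => ?_
    rw [Real.rpow_def_of_pos hr]
  have := ENNReal.tendsto_ofReal hreal
  simp only [ENNReal.ofReal_one] at this
  refine this.congr fun n => ?_
  rw [← ENNReal.ofReal_rpow_of_pos hr, ENNReal.ofReal_toReal hxt]

private lemma aux_tendsto {c : ℕ → ℝ} (hc : Tendsto c atTop atTop)
    {M : ℝ≥0∞} (hM0 : M ≠ 0) (hMt : M ≠ ⊤) {T : ℕ → ℝ≥0∞} {β : ℝ} (hβ : 0 < β)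
    (hub : ∀ᶠ n in atTop, T n ≤ M ^ (1 / c n))
    (hlb : ∀ ε : ℝ, ε ∈ Ioo (0:ℝ) 1 → ∃ m : ℝ≥0∞, m ≠ 0 ∧ m ≠ ⊤ ∧
      ∀ᶠ n in atTop, ENNReal.ofReal ((1 - ε) ^ β) * m ^ (1 / c n) ≤ T n) :
    Tendsto T atTop (nhds 1) := by
  have hup : limsup T atTop ≤ 1 := by
    have h1 : Tendsto (fun n => M ^ (1 / c n)) atTop (nhds 1) :=
      tendsto_rpow_one_div_aux hM0 hMt hc
    calc limsup T atTop ≤ limsup (fun n => M ^ (1 / c n)) atTop := limsup_le_limsup hub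
      _ = 1 := h1.limsup_eq
  have hlow : (1 : ℝ≥0∞) ≤ liminf T atTop := by
    by_contra h
    push_neg at h
    obtain ⟨y, hy1, hy2⟩ := exists_between h
    have hyt : y ≠ ⊤ := (hy2.trans_le le_top).ne
    have hyr : y.toReal < 1 := by
      have := (ENNReal.toReal_lt_toReal hyt ENNReal.one_ne_top).mpr hy2
      simpa using this
    set r : ℝ := max y.toReal (1 / 2) with hrdef
    have hr0 : 0 < r := lt_max_of_lt_right (by norm_num)
    have hr1 : r < 1 := max_lt hyr (by norm_num)
    set ε : ℝ := 1 - r ^ (1 / β) with hεdef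
    have hpow0 : 0 < r ^ (1 / β) := Real.rpow_pos_of_pos hr0 _
    have hpow1 : r ^ (1 / β) < 1 := Real.rpow_lt_one hr0.le hr1 (by positivity)
    have hε : ε ∈ Ioo (0:ℝ) 1 := ⟨by simp only [hεdef]; linarith, by simp only [hεdef]; linarith⟩
    have h1ε : (1 - ε) = r ^ (1 / β) := by simp [hεdef]
    have hεβ : (1 - ε) ^ β = r := by
      rw [h1ε, ← Real.rpow_mul hr0.le, one_div_mul_cancel hβ.ne', Real.rpow_one]
    obtain ⟨m, hm0, hmt, hev⟩ := hlb ε hε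
    have hmlim : Tendsto (fun n => ENNReal.ofReal ((1 - ε) ^ β) * m ^ (1 / c n)) atTop
        (nhds (ENNReal.ofReal ((1 - ε) ^ β) * 1)) :=
      ENNReal.Tendsto.const_mul (tendsto_rpow_one_div_aux hm0 hmt hc) (Or.inl one_ne_zero)
    have hliminf : ENNReal.ofReal ((1 - ε) ^ β) ≤ liminf T atTop := by
      have := liminf_le_liminf hev
      rwa [hmlim.liminf_eq, mul_one] at this
    have hy_le : y ≤ ENNReal.ofReal ((1 - ε) ^ β) := by
      rw [hεβ, ← ENNReal.ofReal_toReal hyt]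
      exact ENNReal.ofReal_le_ofReal (le_max_left _ _)
    exact hy1.not_ge (hy_le.trans hliminf)
  have hli : liminf T atTop = 1 :=
    le_antisymm ((liminf_le_limsup).trans hup) hlow
  have hls : limsup T atTop = 1 := le_antisymm hup (hlow.trans liminf_le_limsup)
  exact tendsto_of_liminf_eq_limsup hli hls

/-- **Ratio control for variable exponent powers.** Let `0 < |Ω| < ∞`,
`p_n` bounded variable exponents with `p_n⁻ = ess inf p_n → ∞` and `p_n⁺ ≤ β p_n⁻`, and
`v` measurable with `0 ≤ v` and `ess sup v = 1`. Then
`(∫_Ω v^{p_n(x)})^{1/p_n⁺} → 1` and `(∫_Ω v^{p_n(x)})^{1/p_n⁻} → 1`. -/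
theorem ve_power_ratio_limits {N : ℕ} (Ω : Set (Fin N → ℝ))
    (hΩ₀ : 0 < volume Ω) (hΩ : volume Ω < ⊤)
    (p : ℕ → (Fin N → ℝ) → ℝ) (hpm : ∀ n, Measurable (p n))
    (hp1 : ∀ n, ∀ᵐ x ∂(volume.restrict Ω), 1 ≤ p n x)
    (hpb : ∀ n, ∃ B : ℝ, ∀ᵐ x ∂(volume.restrict Ω), p n x ≤ B)
    (hpinf : Tendsto (fun n => essInf (p n) (volume.restrict Ω)) atTop atTop)
    (β : ℝ) (hβ : 0 < β)
    (hratio : ∀ n, essSup (p n) (volume.restrict Ω)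
      ≤ β * essInf (p n) (volume.restrict Ω))
    (v : (Fin N → ℝ) → ℝ) (hv : Measurable v) (hv0 : ∀ x, 0 ≤ v x)
    (hvsup : essSup v (volume.restrict Ω) = 1) :
    Tendsto (fun n => (∫⁻ x in Ω, ENNReal.ofReal (v x ^ p n x))
        ^ (1 / essSup (p n) (volume.restrict Ω))) atTop (nhds 1) ∧
    Tendsto (fun n => (∫⁻ x in Ω, ENNReal.ofReal (v x ^ p n x))
        ^ (1 / essInf (p n) (volume.restrict Ω))) atTop (nhds 1) := by
  set μ := volume.restrict Ω with hμdef
  have hμuniv : μ Set.univ = volume Ω := by simp [hμdef]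
  have hμ0 : μ ≠ 0 := by
    intro h
    rw [h] at hμuniv
    exact hΩ₀.ne' (by simpa using hμuniv.symm)
  haveI : NeBot (ae μ) := ae_neBot.mpr hμ0
  set a := fun n => essSup (p n) μ with hadef
  set b := fun n => essInf (p n) μ with hbdef
  -- boundedness of p n
  have hbdd : ∀ n, IsBoundedUnder (· ≤ ·) (ae μ) (p n) := fun n => by
    obtain ⟨B, hB⟩ := hpb n
    exact ⟨B, eventually_map.mpr hB⟩
  have hbdd' : ∀ n, IsBoundedUnder (· ≥ ·) (ae μ) (p n) := fun n =>
    ⟨1, eventually_map.mpr (hp1 n)⟩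
  have hpa : ∀ n, ∀ᵐ x ∂μ, p n x ≤ a n := fun n => ae_le_essSup (hbdd n)
  have hbp : ∀ n, ∀ᵐ x ∂μ, b n ≤ p n x := fun n => ae_essInf_le (hbdd' n)
  have hba : ∀ n, b n ≤ a n := by
    intro n
    obtain ⟨x, h1, h2⟩ := ((hpa n).and (hbp n)).exists
    exact h2.trans h1
  have ha_top : Tendsto a atTop atTop := tendsto_atTop_mono hba hpinf
  have hbpos : ∀ᶠ n in atTop, 1 ≤ b n := hpinf.eventually_ge_atTop 1
  -- v ≤ 1 a.e.
  have hkey : ∀ a0 : ℝ, μ {x | a0 < v x} = 0 ↔ ∀ᵐ x ∂μ, v x ≤ a0 := by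
    intro a0
    rw [ae_iff]
    simp only [not_le]
  have hvbdd : ∃ a0 : ℝ, ∀ᵐ x ∂μ, v x ≤ a0 := by
    by_contra h
    have h0 : essSup v μ = 0 := by
      rw [essSup_eq_sInf]
      convert Real.sInf_empty
      · rfl
      rw [eq_empty_iff_forall_notMem]
      intro a0 ha0
      exact h ⟨a0, (hkey a0).1 ha0⟩
    rw [hvsup] at h0
    norm_num at h0
  obtain ⟨a0, ha0⟩ := hvbdd
  have hv1 : ∀ᵐ x ∂μ, v x ≤ 1 := by
    have := ae_le_essSup (μ := μ) (f := v) ⟨a0, eventually_map.mpr ha0⟩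
    rwa [hvsup] at this
  -- upper bound for the integral
  have hSub : ∀ n, (∫⁻ x, ENNReal.ofReal (v x ^ p n x) ∂μ) ≤ volume Ω := by
    intro n
    calc (∫⁻ x, ENNReal.ofReal (v x ^ p n x) ∂μ) ≤ ∫⁻ _, 1 ∂μ := by
          refine lintegral_mono_ae ?_
          filter_upwards [hv1, hp1 n] with x hx hx1
          exact ENNReal.ofReal_le_one.mpr (Real.rpow_le_one (hv0 x) hx (by linarith))
      _ = volume Ω := by simp [hμuniv]
  -- lower bound for the integral
  have hA : ∀ ε : ℝ, ε ∈ Ioo (0:ℝ) 1 → ∃ m : ℝ≥0∞, m ≠ 0 ∧ m ≠ ⊤ ∧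
      ∀ n, ENNReal.ofReal (1 - ε) ^ (a n) * m ≤ ∫⁻ x, ENNReal.ofReal (v x ^ p n x) ∂μ := by
    rintro ε ⟨hε0, hε1⟩
    set A := {x | 1 - ε < v x} with hAdef
    have hAmeas : MeasurableSet A := measurableSet_lt measurable_const hv
    have hm0 : μ A ≠ 0 := by
      intro h0
      have hvle : ∀ᵐ x ∂μ, v x ≤ 1 - ε := (hkey (1 - ε)).1 h0
      have hcob : IsCoboundedUnder (· ≤ ·) (ae μ) v :=
        IsBoundedUnder.isCoboundedUnder_le ⟨0, eventually_map.mpr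
          (Eventually.of_forall fun x => hv0 x)⟩
      have h2 : essSup v μ ≤ 1 - ε := limsup_le_of_le hcob hvle
      rw [hvsup] at h2
      linarith
    have hmt : μ A ≠ ⊤ := (lt_of_le_of_lt (le_trans (measure_mono (subset_univ A))
      hμuniv.le) hΩ).ne
    refine ⟨μ A, hm0, hmt, fun n => ?_⟩
    calc ENNReal.ofReal (1 - ε) ^ (a n) * μ A
        = ∫⁻ _ in A, ENNReal.ofReal ((1 - ε) ^ (a n)) ∂μ := by
          rw [setLIntegral_const, ENNReal.ofReal_rpow_of_pos (by linarith)]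
      _ ≤ ∫⁻ x in A, ENNReal.ofReal (v x ^ p n x) ∂μ := by
          refine lintegral_mono_ae ?_
          filter_upwards [ae_restrict_of_ae (hpa n), ae_restrict_of_ae (hp1 n),
            ae_restrict_mem hAmeas] with x hxa hx1 hxA
          have hxA' : 1 - ε < v x := hxA
          refine ENNReal.ofReal_le_ofReal ?_
          calc (1 - ε) ^ (a n) ≤ (1 - ε) ^ (p n x) :=
                Real.rpow_le_rpow_of_exponent_ge (by linarith) (by linarith) hxa
            _ ≤ v x ^ (p n x) := Real.rpow_le_rpow (by linarith) hxA'.le (by linarith)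
      _ ≤ ∫⁻ x, ENNReal.ofReal (v x ^ p n x) ∂μ := setLIntegral_le_lintegral _ _
  -- β ≥ 1
  have hβ1 : 1 ≤ β := by
    obtain ⟨n, hn⟩ := hbpos.exists
    have h1 := hratio n
    have h2 := hba n
    nlinarith
  -- common step
  have key : ∀ c : ℕ → ℝ, Tendsto c atTop atTop →
      (∀ᶠ n in atTop, a n * (1 / c n) ≤ β) →
      Tendsto (fun n => (∫⁻ x, ENNReal.ofReal (v x ^ p n x) ∂μ) ^ (1 / c n)) atTop (nhds 1) := by
    intro c hc hrc
    refine aux_tendsto hc hΩ₀.ne' hΩ.ne hβ ?_ ?_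
    · filter_upwards [hc.eventually_ge_atTop 1] with n hn
      exact ENNReal.rpow_le_rpow (hSub n) (one_div_nonneg.mpr (by linarith))
    · intro ε hε
      obtain ⟨m, hm0, hmt, hS⟩ := hA ε hε
      refine ⟨m, hm0, hmt, ?_⟩
      filter_upwards [hc.eventually_ge_atTop 1, hrc] with n hn hrcn
      have hcn : 0 ≤ 1 / c n := one_div_nonneg.mpr (by linarith)
      have h1 : (ENNReal.ofReal (1 - ε) ^ (a n) * m) ^ (1 / c n)
          ≤ (∫⁻ x, ENNReal.ofReal (v x ^ p n x) ∂μ) ^ (1 / c n) :=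
        ENNReal.rpow_le_rpow (hS n) hcn
      rw [ENNReal.mul_rpow_of_nonneg _ _ hcn, ← ENNReal.rpow_mul] at h1
      refine le_trans (mul_le_mul_left ?_ _) h1
      rw [← ENNReal.ofReal_rpow_of_pos (by linarith [hε.2])]
      exact ENNReal.rpow_le_rpow_of_exponent_ge
        (ENNReal.ofReal_le_one.mpr (by linarith [hε.1])) hrcn
  constructor
  · refine key a ha_top ?_
    filter_upwards [ha_top.eventually_ge_atTop 1] with n hn
    rw [mul_one_div, div_self (by linarith)]
    exact hβ1
  · refine key b hpinf ?_
    filter_upwards [hbpos] with n hn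
    rw [mul_one_div]
    exact (div_le_iff₀ (by linarith)).mpr (by linarith [hratio n])
end
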